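/- arXiv:1902.07578 — 2 statements merged into one kernel-verified Lean document; each statement's English description precedes it below -/
import Mathlib

section
/- A homeomorphism f of a compact metric space has the L-shadowing property if and only if f has the shadowing property and for every ε>0 there exists δ>0 such that d(x,y)<δ implies V^s_ε(x) ∩ V^u_ε(y) ≠ ∅, where V^s_ε(x) = W^s(x) ∩ W^s_ε(x) and V^u_ε(y) = W^u(y) ∩ W^u_ε(y). -/
open Filter Metric Set Topology

variable {X : Type*} [MetricSpace X]

/-- `f^k x` for `k : ℤ`, where `f` is a homeomorphism. -/
def iterZ (f : X ≃ₜ X) (k : ℤ) (x : X) : X :=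
  if 0 ≤ k then (⇑f)^[k.toNat] x else (⇑f.symm)^[(-k).toNat] x

/-- The classical shadowing property. -/
def Shadowing (f : X ≃ₜ X) : Prop :=
  ∀ ε > (0:ℝ), ∃ δ > (0:ℝ), ∀ x : ℤ → X,
    (∀ k : ℤ, dist (f (x k)) (x (k+1)) < δ) →
    ∃ z : X, ∀ k : ℤ, dist (iterZ f k z) (x k) < ε

/-- The L-shadowing property. -/
def LShadowing (f : X ≃ₜ X) : Prop :=
  ∀ ε > (0:ℝ), ∃ δ > (0:ℝ), ∀ x : ℤ → X,
    (∀ k : ℤ, dist (f (x k)) (x (k+1)) ≤ δ) →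
    Tendsto (fun k : ℤ => dist (f (x k)) (x (k+1))) cofinite (nhds 0) →
    ∃ z : X, (∀ k : ℤ, dist (iterZ f k z) (x k) ≤ ε) ∧
      Tendsto (fun k : ℤ => dist (iterZ f k z) (x k)) cofinite (nhds 0)

/-- The stable set of `x`. -/
def stableSet (f : X ≃ₜ X) (x : X) : Set X :=
  {y | Tendsto (fun n : ℕ => dist ((⇑f)^[n] x) ((⇑f)^[n] y)) atTop (nhds 0)}

/-- The unstable set of `x`. -/
def unstableSet (f : X ≃ₜ X) (x : X) : Set X := stableSet f.symm x

/-- The local stable set of size `ε` of `x`. -/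
def localStable (f : X ≃ₜ X) (ε : ℝ) (x : X) : Set X :=
  {y | ∀ n : ℕ, dist ((⇑f)^[n] x) ((⇑f)^[n] y) ≤ ε}

/-- The local unstable set of size `ε` of `x`. -/
def localUnstable (f : X ≃ₜ X) (ε : ℝ) (x : X) : Set X := localStable f.symm ε x

/-- `V^s_ε(x) = W^s(x) ∩ W^s_ε(x)`. -/
def Vs (f : X ≃ₜ X) (ε : ℝ) (x : X) : Set X := stableSet f x ∩ localStable f ε x

/-- `V^u_ε(x) = W^u(x) ∩ W^u_ε(x)`. -/
def Vu (f : X ≃ₜ X) (ε : ℝ) (x : X) : Set X := unstableSet f x ∩ localUnstable f ε x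

/-- The limit shadowing property. -/
def LimitShadowing (f : X ≃ₜ X) : Prop :=
  ∀ x : ℕ → X, Tendsto (fun k : ℕ => dist (f (x k)) (x (k+1))) atTop (nhds 0) →
    ∃ y : X, Tendsto (fun k : ℕ => dist ((⇑f)^[k] y) (x k)) atTop (nhds 0)

/-- The two-sided limit shadowing property. -/
def TwoSidedLimitShadowing (f : X ≃ₜ X) : Prop :=
  ∀ x : ℤ → X, Tendsto (fun k : ℤ => dist (f (x k)) (x (k+1))) cofinite (nhds 0) →
    ∃ y : X, Tendsto (fun k : ℤ => dist (iterZ f k y) (x k)) cofinite (nhds 0)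

/-- A non-wandering point. -/
def NonWandering (f : X ≃ₜ X) (x : X) : Prop :=
  ∀ U : Set X, IsOpen U → x ∈ U → ∃ k : ℕ, 0 < k ∧ ((⇑f)^[k] '' U ∩ U).Nonempty

/-- The non-wandering set. -/
def omegaSet (f : X ≃ₜ X) : Set X := {x | NonWandering f x}

/-- Topologically mixing. -/
def TopMixing (f : X ≃ₜ X) : Prop :=
  ∀ U V : Set X, IsOpen U → IsOpen V → U.Nonempty → V.Nonempty →
    ∃ n : ℕ, 0 < n ∧ ∀ k ≥ n, ((⇑f)^[k] '' U ∩ V).Nonempty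

/-- `f` is expansive on the set `A` (as a subsystem). -/
def ExpansiveOn (f : X ≃ₜ X) (A : Set X) : Prop :=
  ∃ c > (0:ℝ), ∀ x ∈ A, ∀ y ∈ A,
    (∀ k : ℤ, dist (iterZ f k x) (iterZ f k y) ≤ c) → x = y

/-- The dynamical ball `Γ_δ(x)`. -/
def dynBall (f : X ≃ₜ X) (δ : ℝ) (x : X) : Set X :=
  {y | ∀ k : ℤ, dist (iterZ f k x) (iterZ f k y) ≤ δ}

/-- There is a periodic `ε`-pseudo-orbit containing both `x` and `y`. -/
def ChainRel (f : X ≃ₜ X) (ε : ℝ) (x y : X) : Prop :=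
  ∃ (n : ℕ) (z : ℕ → X), 0 < n ∧ z 0 = x ∧ z n = x ∧ (∃ i ≤ n, z i = y) ∧
    ∀ i < n, dist (f (z i)) (z (i+1)) < ε

/-- The chain recurrent class of `x`. -/
def chainClass (f : X ≃ₜ X) (x : X) : Set X := {y | ∀ ε > (0:ℝ), ChainRel f ε x y}

/-- `h` is a semiconjugacy from `g` on `K` to the full shift on two symbols. -/
def SemiConjShift (g : X → X) (K : Set X) (h : X → (ℤ → Bool)) : Prop :=
  ContinuousOn h K ∧ (∀ s : ℤ → Bool, ∃ p ∈ K, h p = s) ∧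
    ∀ p ∈ K, h (g p) = fun i => h p (i + 1)

/-- `f` admits arbitrarily small topological semi-horseshoes inside `C`. -/
def SmallHorseshoes (f : X ≃ₜ X) (C : Set X) : Prop :=
  ∀ ε > (0:ℝ), ∃ N : ℕ, 1 ≤ N ∧ ∃ K : Set X, K ⊆ C ∧ IsCompact K ∧
    (⇑f)^[N] '' K = K ∧ (∀ k : ℤ, Metric.diam (iterZ f k '' K) ≤ ε) ∧
    ∃ h : X → (ℤ → Bool), SemiConjShift ((⇑f)^[N]) K h


lemma iterZ_zero (f : X ≃ₜ X) (x : X) : iterZ f 0 x = x := by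
  simp [iterZ]

lemma iterZ_natCast (f : X ≃ₜ X) (n : ℕ) (x : X) : iterZ f n x = (⇑f)^[n] x := by
  simp [iterZ]

lemma iterZ_neg_natCast (f : X ≃ₜ X) (n : ℕ) (x : X) :
    iterZ f (-(n:ℤ)) x = (⇑f.symm)^[n] x := by
  rcases Nat.eq_zero_or_pos n with h | h
  · simp [h, iterZ]
  · have : ¬ (0:ℤ) ≤ -(n:ℤ) := by omega
    simp [iterZ, this, Nat.pos_iff_ne_zero.mp h]

lemma iterZ_succ (f : X ≃ₜ X) (k : ℤ) (x : X) : iterZ f (k+1) x = f (iterZ f k x) := by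
  rcases le_or_gt 0 k with h | h
  · have h1 : (0:ℤ) ≤ k + 1 := by omega
    have h2 : (k+1).toNat = k.toNat + 1 := by omega
    simp only [iterZ, if_pos h, if_pos h1, h2, Function.iterate_succ_apply']
  · have h2 : (-k).toNat = (-(k+1)).toNat + 1 := by omega
    have h3 : ¬ (0:ℤ) ≤ k := by omega
    simp only [iterZ, if_neg h3, h2, Function.iterate_succ_apply']
    rcases le_or_gt 0 (k+1) with h4 | h4
    · have : k + 1 = 0 := by omega
      simp [this, if_pos h4, Homeomorph.apply_symm_apply]
    · have : ¬ (0:ℤ) ≤ k + 1 := by omega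
      simp [this, Homeomorph.apply_symm_apply]

lemma iterZ_pred (f : X ≃ₜ X) (k : ℤ) (x : X) : iterZ f (k-1) x = f.symm (iterZ f k x) := by
  have := iterZ_succ f (k-1) x
  simp only [sub_add_cancel] at this
  rw [this, Homeomorph.symm_apply_apply]

lemma iterZ_add (f : X ≃ₜ X) (j k : ℤ) (x : X) :
    iterZ f (j + k) x = iterZ f j (iterZ f k x) := by
  induction j using Int.induction_on with
  | zero => simp [iterZ_zero]
  | succ n ih =>
      have : (n:ℤ) + 1 + k = ((n:ℤ) + k) + 1 := by ring
      rw [this, iterZ_succ, ih, ← iterZ_succ]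
  | pred n ih =>
      have : (-(n:ℤ) - 1) + k = ((-(n:ℤ) + k)) - 1 := by ring
      rw [this, iterZ_pred, ih, ← iterZ_pred]

lemma continuous_iterZ (f : X ≃ₜ X) (k : ℤ) : Continuous (iterZ f k) := by
  unfold iterZ
  split
  · exact (f.continuous.iterate _)
  · exact (f.symm.continuous.iterate _)

lemma iterZ_symm (f : X ≃ₜ X) (k : ℤ) (x : X) : iterZ f.symm k x = iterZ f (-k) x := by
  rcases le_or_gt 0 k with h | h
  · obtain ⟨n, rfl⟩ : ∃ n : ℕ, k = n := ⟨k.toNat, by omega⟩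
    rw [iterZ_natCast, iterZ_neg_natCast]
  · obtain ⟨n, rfl⟩ : ∃ n : ℕ, k = -(n:ℤ) := ⟨(-k).toNat, by omega⟩
    rw [iterZ_neg_natCast, neg_neg, iterZ_natCast, Homeomorph.symm_symm]

lemma iterZ_iterate (f : X ≃ₜ X) (a : ℤ) (n : ℕ) (x : X) :
    (⇑f)^[n] (iterZ f a x) = iterZ f (a + n) x := by
  rw [← iterZ_natCast, ← iterZ_add, add_comm]

lemma iterZ_symm_iterate (f : X ≃ₜ X) (a : ℤ) (n : ℕ) (x : X) :
    (⇑f.symm)^[n] (iterZ f a x) = iterZ f (a - n) x := by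
  rw [← iterZ_natCast f.symm, iterZ_symm, ← iterZ_add]
  ring_nf


lemma nat_tendsto_cofinite : Tendsto (fun n : ℕ => (n:ℤ)) atTop cofinite :=
  Tendsto.mono_right tendsto_natCast_atTop_atTop (by rw [Int.cofinite_eq]; exact le_sup_right)

lemma neg_nat_tendsto_cofinite : Tendsto (fun n : ℕ => -(n:ℤ)) atTop cofinite := by
  have h1 : Tendsto (fun n : ℕ => -(n:ℤ)) atTop atBot :=
    tendsto_neg_atBot_iff.mpr tendsto_natCast_atTop_atTop
  exact h1.mono_right (by rw [Int.cofinite_eq]; exact le_sup_left)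

lemma exists_tail_bound {p : ℤ → Prop} (h : ∀ᶠ k in (cofinite : Filter ℤ), p k) :
    ∃ t : ℤ, 0 ≤ t ∧ ∀ k : ℤ, (t ≤ k ∨ k ≤ -t) → p k := by
  rw [eventually_cofinite] at h
  obtain ⟨a, ha⟩ := h.bddAbove
  obtain ⟨b, hb⟩ := h.bddBelow
  refine ⟨max (max a (-b) + 1) 0, le_max_right _ _, fun k hk => ?_⟩
  by_contra hp
  have h1 : k ≤ a := ha (show k ∈ {x | ¬ p x} from hp)
  have h2 : b ≤ k := hb (show k ∈ {x | ¬ p x} from hp)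
  have h3 : a ≤ max a (-b) := le_max_left _ _
  have h4 : -b ≤ max a (-b) := le_max_right _ _
  have h5 : max a (-b) + 1 ≤ max (max a (-b) + 1) 0 := le_max_left _ _
  omega

lemma eventually_zero_tendsto {u : ℤ → ℝ} {s : Set ℤ} (hs : s.Finite)
    (h : ∀ k ∉ s, u k = 0) : Tendsto u cofinite (nhds 0) := by
  refine Tendsto.congr' ?_ tendsto_const_nhds
  rw [EventuallyEq, eventually_cofinite]
  exact hs.subset (fun k hk => by by_contra hks; exact hk (h k hks).symm)

section Tails
variable (f : X ≃ₜ X)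

/-- forward tail shadowing -/
lemma shadow_future (hs : Shadowing f) {γ : ℝ} (hγ : 0 < γ) :
    ∃ β > (0:ℝ), ∀ (x : ℤ → X) (a : ℤ),
      (∀ k ≥ a, dist (f (x k)) (x (k+1)) < β) →
      ∃ w : X, ∀ k ≥ a, dist (iterZ f k w) (x k) < γ := by
  obtain ⟨β, hβ, hsh⟩ := hs γ hγ
  refine ⟨β, hβ, fun x a herr => ?_⟩
  set x' : ℤ → X := fun k => if a ≤ k then x k else iterZ f (k - a) (x a) with hx'
  have hx'eq : ∀ k ≥ a, x' k = x k := fun k hk => if_pos hk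
  have herr' : ∀ k : ℤ, dist (f (x' k)) (x' (k+1)) < β := by
    intro k
    rcases le_or_gt a k with hk | hk
    · rw [hx'eq k hk, hx'eq (k+1) (by omega)]; exact herr k hk
    · have h1 : x' k = iterZ f (k - a) (x a) := if_neg (by omega)
      have h2 : x' (k+1) = iterZ f (k + 1 - a) (x a) := by
        rcases le_or_gt a (k+1) with h | h
        · have : k + 1 = a := by omega
          rw [hx'eq (k+1) h, this]; simp [iterZ_zero]
        · exact if_neg (by omega)
      rw [h1, h2, show k + 1 - a = (k - a) + 1 by ring, iterZ_succ, dist_self]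
      exact hβ
  obtain ⟨w, hw⟩ := hsh x' herr'
  exact ⟨w, fun k hk => by rw [← hx'eq k hk]; exact hw k⟩

/-- backward tail shadowing -/
lemma shadow_past (hs : Shadowing f) {γ : ℝ} (hγ : 0 < γ) :
    ∃ β > (0:ℝ), ∀ (x : ℤ → X) (a : ℤ),
      (∀ k < a, dist (f (x k)) (x (k+1)) < β) →
      ∃ w : X, ∀ k ≤ a, dist (iterZ f k w) (x k) < γ := by
  obtain ⟨β, hβ, hsh⟩ := hs γ hγ
  refine ⟨β, hβ, fun x a herr => ?_⟩
  set x' : ℤ → X := fun k => if k ≤ a then x k else iterZ f (k - a) (x a) with hx'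
  have hx'eq : ∀ k ≤ a, x' k = x k := fun k hk => if_pos hk
  have hx'eq2 : ∀ k ≥ a, x' k = iterZ f (k - a) (x a) := by
    intro k hk
    rcases eq_or_lt_of_le hk with h | h
    · rw [hx'eq k (by omega), ← h]; simp [iterZ_zero]
    · exact if_neg (by omega)
  have herr' : ∀ k : ℤ, dist (f (x' k)) (x' (k+1)) < β := by
    intro k
    rcases lt_or_ge k a with hk | hk
    · rw [hx'eq k (by omega), hx'eq (k+1) (by omega)]; exact herr k hk
    · rw [hx'eq2 k hk, hx'eq2 (k+1) (by omega), show k + 1 - a = (k - a) + 1 by ring,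
        iterZ_succ, dist_self]
      exact hβ
  obtain ⟨w, hw⟩ := hsh x' herr'
  exact ⟨w, fun k hk => by rw [← hx'eq k hk]; exact hw k⟩

end Tails

lemma iterZ_eq_iterate (f : X ≃ₜ X) {j : ℤ} {n : ℕ} (h : j = (n:ℤ)) (x : X) :
    iterZ f j x = (⇑f)^[n] x := by rw [h, iterZ_natCast]

lemma iterZ_eq_symm_iterate (f : X ≃ₜ X) {j : ℤ} {n : ℕ} (h : j = -(n:ℤ)) (x : X) :
    iterZ f j x = (⇑f.symm)^[n] x := by rw [h, iterZ_neg_natCast]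

/-- Splice two orbits using the gluing property. -/
lemma glue_step (f : X ≃ₜ X) {ε δ : ℝ}
    (hg : ∀ x y : X, dist x y < δ → (Vs f ε x ∩ Vu f ε y).Nonempty)
    (y w : X) (a : ℤ) (hclose : dist (iterZ f a w) (iterZ f a y) < δ) :
    ∃ y' : X,
      (∀ k ≥ a, dist (iterZ f k y') (iterZ f k w) ≤ ε) ∧
      (∀ k ≤ a, dist (iterZ f k y') (iterZ f k y) ≤ ε) ∧
      Tendsto (fun n : ℕ => dist (iterZ f (a + n) y') (iterZ f (a + n) w)) atTop (nhds 0) ∧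
      Tendsto (fun n : ℕ => dist (iterZ f (a - n) y') (iterZ f (a - n) y)) atTop (nhds 0) := by
  obtain ⟨p, ⟨hps, hpls⟩, ⟨hpu, hplu⟩⟩ := hg (iterZ f a w) (iterZ f a y) hclose
  simp only [stableSet, localStable, unstableSet, localUnstable, Set.mem_setOf_eq] at hps hpls hpu hplu
  have key : ∀ k : ℤ, iterZ f k (iterZ f (-a) p) = iterZ f (k - a) p := by
    intro k; rw [← iterZ_add]; congr 1
  refine ⟨iterZ f (-a) p, ?_, ?_, ?_, ?_⟩
  · intro k hk
    have h3 := hpls (k - a).toNat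
    rw [iterZ_iterate, show a + ((k-a).toNat : ℤ) = k by omega,
      ← iterZ_eq_iterate f (show k - a = (((k-a).toNat : ℕ):ℤ) by omega), ← key] at h3
    rw [dist_comm]; exact h3
  · intro k hk
    have h3 := hplu (a - k).toNat
    rw [iterZ_symm_iterate, show a - ((a-k).toNat : ℤ) = k by omega,
      ← iterZ_eq_symm_iterate f (show k - a = -(((a-k).toNat : ℕ):ℤ) by omega), ← key] at h3
    rw [dist_comm]; exact h3
  · refine hps.congr fun n => ?_
    rw [iterZ_iterate, ← iterZ_eq_iterate f (show a + (n:ℤ) - a = ((n:ℕ):ℤ) by ring), ← key,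
      dist_comm]
  · refine hpu.congr fun n => ?_
    rw [iterZ_symm_iterate, ← iterZ_eq_symm_iterate f (show a - (n:ℤ) - a = -((n:ℕ):ℤ) by ring),
      ← key, dist_comm]

lemma lshadowing_to_shadowing [CompactSpace X] (f : X ≃ₜ X) (h : LShadowing f) :
    Shadowing f := by
  intro ε hε
  obtain ⟨δ, hδ, hL⟩ := h (ε/2) (by linarith)
  refine ⟨δ, hδ, fun x herr => ?_⟩
  -- truncated pseudo-orbits
  set T : ℕ → ℤ → X := fun m k =>
    if (m:ℤ) ≤ k then iterZ f (k - m) (x m)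
    else if k ≤ -(m:ℤ) then iterZ f (k + m) (x (-m)) else x k with hT
  have hTeq : ∀ (m : ℕ) (k : ℤ), -(m:ℤ) ≤ k → k ≤ m → T m k = x k := by
    intro m k h1 h2
    rcases le_or_gt (m:ℤ) k with h3 | h3
    · rw [hT]; simp only [if_pos h3]
      rw [show k - (m:ℤ) = 0 by omega, iterZ_zero]
      congr 1; omega
    · rcases le_or_gt k (-(m:ℤ)) with h4 | h4
      · rw [hT]; simp only [if_neg (by omega : ¬ ((m:ℤ) ≤ k)), if_pos h4]
        rw [show k + (m:ℤ) = 0 by omega, iterZ_zero]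
        congr 1; omega
      · rw [hT]
        simp only [if_neg (by omega : ¬ ((m:ℤ) ≤ k)), if_neg (by omega : ¬ (k ≤ -(m:ℤ)))]
  have hTerr : ∀ (m : ℕ) (k : ℤ), dist (f (T m k)) (T m (k+1)) ≤ δ ∧
      ((k < -(m:ℤ) ∨ (m:ℤ) ≤ k) → dist (f (T m k)) (T m (k+1)) = 0) := by
    intro m k
    rcases le_or_gt (m:ℤ) k with h1 | h1
    · have e1 : T m k = iterZ f (k - m) (x m) := if_pos h1
      have e2 : T m (k+1) = iterZ f (k + 1 - m) (x m) := if_pos (by omega)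
      rw [e1, e2, show (k + 1 - (m:ℤ)) = (k - m) + 1 by ring, iterZ_succ, dist_self]
      exact ⟨le_of_lt hδ, fun _ => rfl⟩
    · rcases lt_or_ge k (-(m:ℤ)) with h2 | h2
      · have e1 : T m k = iterZ f (k + m) (x (-m)) := by
          rw [hT]; simp only [if_neg (by omega : ¬ ((m:ℤ) ≤ k)), if_pos (by omega : k ≤ -(m:ℤ))]
        have e2 : T m (k+1) = iterZ f (k + 1 + m) (x (-m)) := by
          rcases le_or_gt (k+1) (-(m:ℤ)) with h3 | h3
          · rcases le_or_gt (m:ℤ) (k+1) with h5 | h5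
            · have hm0 : (m:ℤ) = 0 := by omega
              have hk0 : k + 1 = 0 := by omega
              rw [hT]; simp only [if_pos h5, hm0, hk0]
              norm_num [iterZ_zero]
            · rw [hT]; simp only [if_neg (by omega : ¬ ((m:ℤ) ≤ k+1)), if_pos h3]
          · have h4 : k + 1 = -(m:ℤ) := by omega
            rw [hTeq m (k+1) (by omega) (by omega), h4,
              show (-(m:ℤ) + (m:ℤ)) = 0 by ring, iterZ_zero]
        rw [e1, e2, show (k + 1 + (m:ℤ)) = (k + m) + 1 by ring, iterZ_succ, dist_self]
        exact ⟨le_of_lt hδ, fun _ => rfl⟩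
      · -- middle: -(m) ≤ k < m
        rw [hTeq m k (by omega) (by omega), hTeq m (k+1) (by omega) (by omega)]
        exact ⟨le_of_lt (herr k), fun hc => by omega⟩
  have hz : ∀ m : ℕ, ∃ z : X, ∀ k : ℤ, dist (iterZ f k z) (T m k) ≤ ε/2 := by
    intro m
    have htend : Tendsto (fun k : ℤ => dist (f (T m k)) (T m (k+1))) cofinite (nhds 0) := by
      apply eventually_zero_tendsto (s := Set.Icc (-(m:ℤ)-1) (m:ℤ)) (Set.finite_Icc _ _)
      intro k hk
      simp only [Set.mem_Icc, not_and_or, not_le] at hk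
      exact (hTerr m k).2 (by omega)
    obtain ⟨z, hz1, _⟩ := hL (T m) (fun k => (hTerr m k).1) htend
    exact ⟨z, hz1⟩
  set S : ℕ → Set X := fun m =>
    {z | ∀ k : ℤ, -(m:ℤ) ≤ k → k ≤ m → dist (iterZ f k z) (x k) ≤ ε/2} with hS
  have hSsub : ∀ m : ℕ, S (m+1) ⊆ S m := by
    intro m z hzm k hk1 hk2
    exact hzm k (by omega) (by omega)
  have hSne : ∀ m : ℕ, (S m).Nonempty := by
    intro m
    obtain ⟨z, hz1⟩ := hz m
    exact ⟨z, fun k h1 h2 => by rw [← hTeq m k h1 h2]; exact hz1 k⟩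
  have hSclosed : ∀ m : ℕ, IsClosed (S m) := by
    intro m
    have : S m = ⋂ (k : ℤ), ⋂ (_ : -(m:ℤ) ≤ k), ⋂ (_ : k ≤ m),
        {z | dist (iterZ f k z) (x k) ≤ ε/2} := by
      ext z; simp [hS]
    rw [this]
    refine isClosed_iInter fun k => isClosed_iInter fun _ => isClosed_iInter fun _ => ?_
    exact isClosed_le (Continuous.dist (continuous_iterZ f k) continuous_const) continuous_const
  have hinter : (⋂ m, S m).Nonempty :=
    IsCompact.nonempty_iInter_of_sequence_nonempty_isCompact_isClosed S hSsub hSne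
      ((hSclosed 0).isCompact) hSclosed
  obtain ⟨z, hzmem⟩ := hinter
  refine ⟨z, fun k => ?_⟩
  have := (Set.mem_iInter.mp hzmem k.natAbs) k (by omega) (by omega)
  calc dist (iterZ f k z) (x k) ≤ ε/2 := this
    _ < ε := by linarith

lemma lshadowing_to_gluing (f : X ≃ₜ X) (h : LShadowing f) :
    ∀ ε > (0:ℝ), ∃ δ > (0:ℝ), ∀ x y : X,
      dist x y < δ → (Vs f ε x ∩ Vu f ε y).Nonempty := by
  intro ε hε
  obtain ⟨δ', hδ', hL⟩ := h (ε/2) (by linarith)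
  refine ⟨min δ' (ε/2), lt_min hδ' (by linarith), fun x y hxy => ?_⟩
  set w : ℤ → X := fun k => if k ≤ -1 then iterZ f k y else iterZ f k x with hw
  have hw1 : ∀ k : ℤ, 0 ≤ k → w k = iterZ f k x := fun k hk => if_neg (by omega)
  have hw2 : ∀ k : ℤ, k ≤ -1 → w k = iterZ f k y := fun k hk => if_pos hk
  have herr : ∀ k : ℤ, dist (f (w k)) (w (k+1)) ≤ δ' ∧
      (k ≠ -1 → dist (f (w k)) (w (k+1)) = 0) := by
    intro k
    rcases lt_or_ge k (-1) with hk | hk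
    · rw [hw2 k (by omega), hw2 (k+1) (by omega), ← iterZ_succ, dist_self]
      exact ⟨le_of_lt hδ', fun _ => rfl⟩
    · rcases eq_or_lt_of_le hk with hk1 | hk1
      · have hk2 : k = -1 := by omega
        subst hk2
        have e0 : (-1 : ℤ) + 1 = 0 := by ring
        rw [hw2 (-1) (le_refl _), e0, hw1 0 (le_refl _), iterZ_zero]
        have e : f (iterZ f (-1) y) = y := by
          have h5 := iterZ_succ f (-1) y
          rw [e0, iterZ_zero] at h5
          exact h5.symm
        rw [e, dist_comm]
        exact ⟨le_trans (le_of_lt hxy) (min_le_left _ _), fun hc => absurd rfl hc⟩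
      · rw [hw1 k (by omega), hw1 (k+1) (by omega), ← iterZ_succ, dist_self]
        exact ⟨le_of_lt hδ', fun _ => rfl⟩
  have htend : Tendsto (fun k : ℤ => dist (f (w k)) (w (k+1))) cofinite (nhds 0) := by
    apply eventually_zero_tendsto (s := {(-1 : ℤ)}) (Set.finite_singleton _)
    intro k hk
    exact (herr k).2 (by simpa using hk)
  obtain ⟨p, hp1, hp2⟩ := hL w (fun k => (herr k).1) htend
  refine ⟨p, ⟨?_, ?_⟩, ?_, ?_⟩
  · -- stableSet f x
    simp only [stableSet, Set.mem_setOf_eq]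
    have := hp2.comp nat_tendsto_cofinite
    refine (this.congr fun n => ?_)
    simp only [Function.comp_apply]
    rw [hw1 n (by omega), iterZ_natCast, iterZ_natCast, dist_comm]
  · -- localStable f ε x
    intro n
    have := hp1 (n : ℤ)
    rw [hw1 n (by omega), iterZ_natCast, iterZ_natCast] at this
    rw [dist_comm]
    linarith
  · -- unstableSet f y
    simp only [unstableSet, stableSet, Set.mem_setOf_eq]
    have h2 := hp2.comp neg_nat_tendsto_cofinite
    have heq : ∀ᶠ n : ℕ in atTop,
        (fun n : ℕ => dist (iterZ f (-(n:ℤ)) p) (w (-(n:ℤ)))) n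
        = (fun n : ℕ => dist ((⇑f.symm)^[n] y) ((⇑f.symm)^[n] p)) n := by
      filter_upwards [eventually_ge_atTop 1] with n hn
      rw [hw2 (-(n:ℤ)) (by omega), iterZ_neg_natCast, iterZ_neg_natCast, dist_comm]
    exact Tendsto.congr' heq h2
  · -- localUnstable f ε y
    intro n
    rcases Nat.eq_zero_or_pos n with hn | hn
    · subst hn
      simp only [Function.iterate_zero, id_eq]
      calc dist y p ≤ dist y x + dist x p := dist_triangle _ _ _
        _ ≤ ε/2 + ε/2 := by
            have h3 := hp1 0
            rw [hw1 0 (le_refl _), iterZ_zero, iterZ_zero] at h3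
            have h4 : dist x y ≤ ε/2 := le_trans (le_of_lt hxy) (min_le_right _ _)
            have h5 : dist y x = dist x y := dist_comm _ _
            have h6 : dist x p = dist p x := dist_comm _ _
            linarith
        _ = ε := by ring
    · have := hp1 (-(n:ℤ))
      rw [hw2 (-(n:ℤ)) (by omega), iterZ_neg_natCast, iterZ_neg_natCast] at this
      rw [dist_comm]
      linarith

/-- One improvement step for the converse direction. -/
lemma converse_step (f : X ≃ₜ X) (x : ℤ → X) (e d d' γ : ℝ)
    (hd : 0 < d) (hd' : 0 < d') (hde : d ≤ e)
    (hγ : 0 < γ) (hγ4 : 4 * γ ≤ d) (hγ4' : 4 * γ ≤ d')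
    (hglue : ∀ p q : X, dist p q < d → (Vs f e p ∩ Vu f e q).Nonempty)
    (s0 : ℤ) (hs0 : 0 ≤ s0)
    (hF : ∀ a : ℤ, s0 ≤ a → ∃ w : X, ∀ k ≥ a, dist (iterZ f k w) (x k) < γ)
    (hP : ∀ a : ℤ, s0 ≤ a → ∃ u : X, ∀ k ≤ -a, dist (iterZ f k u) (x k) < γ)
    (y : X) (t : ℤ) (ht : 0 ≤ t)
    (hy : ∀ k : ℤ, (t ≤ k ∨ k ≤ -t) → dist (iterZ f k y) (x k) ≤ d / 2) :
    ∃ (y' : X) (t' : ℤ), t ≤ t' ∧ 0 ≤ t' ∧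
      (∀ k : ℤ, (t' ≤ k ∨ k ≤ -t') → dist (iterZ f k y') (x k) ≤ d' / 2) ∧
      (∀ k : ℤ, dist (iterZ f k y') (iterZ f k y) ≤ 5 * e) := by
  have he : 0 < e := lt_of_lt_of_le hd hde
  set s : ℤ := max t s0 with hs
  have hst : t ≤ s := le_max_left _ _
  have hss0 : s0 ≤ s := le_max_right _ _
  have hs_nonneg : 0 ≤ s := le_trans ht hst
  obtain ⟨w, hw⟩ := hF s hss0
  -- splice 1 (future)
  have hclose1 : dist (iterZ f s w) (iterZ f s y) < d := by
    calc dist (iterZ f s w) (iterZ f s y)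
        ≤ dist (iterZ f s w) (x s) + dist (iterZ f s y) (x s) := dist_triangle_right _ _ _
      _ < γ + d/2 := by
          have h1 := hw s (le_refl _)
          have h2 := hy s (Or.inl hst)
          linarith
      _ ≤ d := by linarith
  obtain ⟨y₁, hF1, hF2, hF3, hF4⟩ := glue_step f hglue y w s hclose1
  -- choose s'
  obtain ⟨N₁, hN₁⟩ := eventually_atTop.mp ((hF4.eventually_lt_const (by linarith : (0:ℝ) < d/8)))
  set s' : ℤ := max (max s (N₁ : ℤ)) s0 with hs'
  have hs's : s ≤ s' := le_trans (le_max_left _ _) (le_max_left _ _)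
  have hs'0 : s0 ≤ s' := le_max_right _ _
  have hs'N : (N₁ : ℤ) ≤ s' := le_trans (le_max_right _ _) (le_max_left _ _)
  have hs'_nonneg : 0 ≤ s' := le_trans hs_nonneg hs's
  have hpast1 : ∀ k : ℤ, k ≤ -s' → dist (iterZ f k y₁) (iterZ f k y) < d/8 := by
    intro k hk
    have hm : (N₁ : ℤ) ≤ s - k := by omega
    have := hN₁ (s - k).toNat (by omega)
    rw [show s - ((s - k).toNat : ℤ) = k by omega] at this
    exact this
  obtain ⟨u, hu⟩ := hP s' hs'0
  -- splice 2 (past)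
  have hclose2 : dist (iterZ f (-s') y₁) (iterZ f (-s') u) < d := by
    have h1 := hu (-s') (le_refl _)
    have h2 := hy (-s') (Or.inr (by omega))
    have h3 := hpast1 (-s') (le_refl _)
    calc dist (iterZ f (-s') y₁) (iterZ f (-s') u)
        ≤ dist (iterZ f (-s') y₁) (iterZ f (-s') y) + dist (iterZ f (-s') y) (x (-s'))
          + dist (x (-s')) (iterZ f (-s') u) := dist_triangle4 _ _ _ _
      _ < d/8 + d/2 + γ := by rw [dist_comm (x (-s'))]; linarith
      _ ≤ d := by linarith
  obtain ⟨y₂, hP1, hP2, hP3, hP4⟩ := glue_step f hglue u y₁ (-s') hclose2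
  -- extract tendsto bounds
  obtain ⟨N₂, hN₂⟩ := eventually_atTop.mp ((hP3.eventually_lt_const (by linarith : (0:ℝ) < d'/8)))
  obtain ⟨N₃, hN₃⟩ := eventually_atTop.mp ((hF3.eventually_lt_const (by linarith : (0:ℝ) < d'/8)))
  obtain ⟨N₄, hN₄⟩ := eventually_atTop.mp ((hP4.eventually_lt_const (by linarith : (0:ℝ) < d'/8)))
  set t' : ℤ := max (max s' (s + N₃)) (max (s' + N₄) (N₂ : ℤ)) with ht'
  have ht's' : s' ≤ t' := le_trans (le_max_left _ _) (le_max_left _ _)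
  refine ⟨y₂, t', le_trans (le_trans hst hs's) ht's', le_trans hs'_nonneg ht's', ?_, ?_⟩
  · intro k hk
    rcases hk with hk | hk
    · -- future side
      have e2 : dist (iterZ f k y₂) (iterZ f k y₁) < d'/8 := by
        have := hN₂ (k + s').toNat (by
          have : (N₂ : ℤ) ≤ t' := le_trans (le_max_right _ _) (le_max_right _ _)
          omega)
        rw [show (-s') + ((k + s').toNat : ℤ) = k by omega] at this
        exact this
      have e3 : dist (iterZ f k y₁) (iterZ f k w) < d'/8 := by
        have h5 : s + (N₃:ℤ) ≤ t' := le_trans (le_max_right _ _) (le_max_left _ _)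
        have := hN₃ (k - s).toNat (by omega)
        rw [show s + ((k - s).toNat : ℤ) = k by omega] at this
        exact this
      have e4 : dist (iterZ f k w) (x k) < γ := hw k (by omega)
      calc dist (iterZ f k y₂) (x k)
          ≤ dist (iterZ f k y₂) (iterZ f k y₁) + dist (iterZ f k y₁) (iterZ f k w)
            + dist (iterZ f k w) (x k) := dist_triangle4 _ _ _ _
        _ ≤ d'/8 + d'/8 + d'/4 := by linarith
        _ = d'/2 := by ring
    · -- past side
      have e2 : dist (iterZ f k y₂) (iterZ f k u) < d'/8 := by
        have h5 : s' + (N₄:ℤ) ≤ t' := le_trans (le_max_left _ _) (le_max_right _ _)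
        have := hN₄ (-s' - k).toNat (by omega)
        rw [show (-s') - ((-s' - k).toNat : ℤ) = k by omega] at this
        exact this
      have e4 : dist (iterZ f k u) (x k) < γ := hu k (by omega)
      calc dist (iterZ f k y₂) (x k)
          ≤ dist (iterZ f k y₂) (iterZ f k u) + dist (iterZ f k u) (x k) := dist_triangle _ _ _
        _ ≤ d'/8 + d'/4 := by linarith
        _ ≤ d'/2 := by linarith
  · intro k
    rcases le_or_gt k (-s') with hk | hk
    · have e1 : dist (iterZ f k y₂) (iterZ f k u) ≤ e := hP2 k hk
      have e2 : dist (iterZ f k u) (x k) < γ := hu k hk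
      have e3 : dist (iterZ f k y) (x k) ≤ d/2 := hy k (Or.inr (by omega))
      have := dist_triangle4 (iterZ f k y₂) (iterZ f k u) (x k) (iterZ f k y)
      rw [dist_comm (x k)] at this
      linarith
    · rcases le_or_gt k s with hk2 | hk2
      · have e1 : dist (iterZ f k y₂) (iterZ f k y₁) ≤ e := hP1 k (by omega)
        have e2 : dist (iterZ f k y₁) (iterZ f k y) ≤ e := hF2 k hk2
        have := dist_triangle (iterZ f k y₂) (iterZ f k y₁) (iterZ f k y)
        linarith
      · have e1 : dist (iterZ f k y₂) (iterZ f k y₁) ≤ e := hP1 k (by omega)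
        have e2 : dist (iterZ f k y₁) (iterZ f k w) ≤ e := hF1 k (by omega)
        have e3 : dist (iterZ f k w) (x k) < γ := hw k (by omega)
        have e4 : dist (iterZ f k y) (x k) ≤ d/2 := hy k (Or.inl (by omega))
        have h5 := dist_triangle4 (iterZ f k y₂) (iterZ f k y₁) (iterZ f k w) (x k)
        have h6 := dist_triangle (iterZ f k y₂) (x k) (iterZ f k y)
        rw [dist_comm (x k)] at h6
        linarith

lemma converse_lshadowing [CompactSpace X] (f : X ≃ₜ X) (hs : Shadowing f)
    (hg : ∀ ε > (0:ℝ), ∃ δ > (0:ℝ), ∀ x y : X,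
      dist x y < δ → (Vs f ε x ∩ Vu f ε y).Nonempty) : LShadowing f := by
  intro ε hε
  -- scales
  set eps : ℕ → ℝ := fun n => ε / 2^(n+4) with heps
  have heps_pos : ∀ n, 0 < eps n := fun n => by positivity
  have heps_half : ∀ n, eps (n+1) = eps n / 2 := by
    intro n
    simp only [heps]
    rw [pow_succ]
    ring
  -- gluing constants
  have hδex : ∀ n : ℕ, ∃ d : ℝ, 0 < d ∧ d ≤ eps n ∧
      ∀ p q : X, dist p q < d → (Vs f (eps n) p ∩ Vu f (eps n) q).Nonempty := by
    intro n
    obtain ⟨d, hd, hgl⟩ := hg (eps n) (heps_pos n)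
    exact ⟨min d (eps n), lt_min hd (heps_pos n), min_le_right _ _,
      fun p q hpq => hgl p q (lt_of_lt_of_le hpq (min_le_left _ _))⟩
  choose δ hδpos hδle hδglue using hδex
  -- tail shadowing constants at accuracy γ n
  set γ : ℕ → ℝ := fun n => min (δ n) (δ (n+1)) / 4 with hγdef
  have hγpos : ∀ n, 0 < γ n := fun n => by
    have := hδpos n; have := hδpos (n+1)
    simp only [hγdef]
    positivity
  have hγ4 : ∀ n, 4 * γ n ≤ δ n := fun n => by
    have : min (δ n) (δ (n+1)) ≤ δ n := min_le_left _ _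
    simp only [hγdef]; linarith
  have hγ4' : ∀ n, 4 * γ n ≤ δ (n+1) := fun n => by
    have : min (δ n) (δ (n+1)) ≤ δ (n+1) := min_le_right _ _
    simp only [hγdef]; linarith
  choose βF hβFpos hβF using fun n => shadow_future f hs (hγpos n)
  choose βP hβPpos hβP using fun n => shadow_past f hs (hγpos n)
  -- base shadowing constant
  obtain ⟨β₀, hβ₀pos, hsh₀⟩ := hs (δ 0 / 4) (by have := hδpos 0; linarith)
  refine ⟨β₀ / 2, by linarith, fun x herr htend => ?_⟩
  -- base point
  obtain ⟨y₀, hy₀⟩ := hsh₀ x (fun k => lt_of_le_of_lt (herr k) (by linarith))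
  -- tail bounds for errors
  have htail : ∀ n : ℕ, ∃ s0 : ℤ, 0 ≤ s0 ∧
      (∀ a : ℤ, s0 ≤ a → ∃ w : X, ∀ k ≥ a, dist (iterZ f k w) (x k) < γ n) ∧
      (∀ a : ℤ, s0 ≤ a → ∃ u : X, ∀ k ≤ -a, dist (iterZ f k u) (x k) < γ n) := by
    intro n
    have hev : ∀ᶠ k in (cofinite : Filter ℤ),
        dist (f (x k)) (x (k+1)) < min (βF n) (βP n) :=
      htend.eventually_lt_const (lt_min (hβFpos n) (hβPpos n))
    obtain ⟨s0, hs0, hsmall⟩ := exists_tail_bound hev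
    refine ⟨s0, hs0, fun a ha => ?_, fun a ha => ?_⟩
    · exact hβF n x a (fun k hk =>
        lt_of_lt_of_le (hsmall k (Or.inl (by omega))) (min_le_left _ _))
    · exact hβP n x (-a) (fun k hk =>
        lt_of_lt_of_le (hsmall k (Or.inr (by omega))) (min_le_right _ _))
  choose s0 hs0 hFtail hPtail using htail
  -- the improvement step, as a total function
  have step : ∀ (n : ℕ) (y : X) (t : ℤ), ∃ (y' : X) (t' : ℤ),
      (0 ≤ t → (∀ k : ℤ, (t ≤ k ∨ k ≤ -t) → dist (iterZ f k y) (x k) ≤ δ n / 2) →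
        (t ≤ t' ∧ 0 ≤ t' ∧
          (∀ k : ℤ, (t' ≤ k ∨ k ≤ -t') → dist (iterZ f k y') (x k) ≤ δ (n+1) / 2) ∧
          (∀ k : ℤ, dist (iterZ f k y') (iterZ f k y) ≤ 5 * eps n))) := by
    intro n y t
    by_cases hc : 0 ≤ t ∧ ∀ k : ℤ, (t ≤ k ∨ k ≤ -t) → dist (iterZ f k y) (x k) ≤ δ n / 2
    · obtain ⟨y', t', h1, h2, h3, h4⟩ := converse_step f x (eps n) (δ n) (δ (n+1)) (γ n)
        (hδpos n) (hδpos (n+1)) (hδle n) (hγpos n) (hγ4 n) (hγ4' n)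
        (hδglue n) (s0 n) (hs0 n) (hFtail n) (hPtail n) y t hc.1 hc.2
      exact ⟨y', t', fun _ _ => ⟨h1, h2, h3, h4⟩⟩
    · exact ⟨y, t, fun h1 h2 => absurd ⟨h1, h2⟩ hc⟩
  choose Y T hstep using step
  -- the sequence
  set seq : ℕ → X × ℤ := fun n =>
    Nat.rec (y₀, (0:ℤ)) (fun n p => (Y n p.1 p.2, T n p.1 p.2)) n with hseq
  have hseq_succ : ∀ n, seq (n+1) = (Y n (seq n).1 (seq n).2, T n (seq n).1 (seq n).2) :=
    fun n => rfl
  -- invariants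
  have hinv : ∀ n : ℕ, 0 ≤ (seq n).2 ∧
      (∀ k : ℤ, ((seq n).2 ≤ k ∨ k ≤ -(seq n).2) → dist (iterZ f k (seq n).1) (x k) ≤ δ n / 2) := by
    intro n
    induction n with
    | zero =>
        have h0 : (seq 0).1 = y₀ := rfl
        have h0' : (seq 0).2 = 0 := rfl
        rw [h0, h0']
        refine ⟨le_refl _, fun k _ => ?_⟩
        have := hy₀ k
        linarith [hδpos 0]
    | succ n ih =>
        obtain ⟨h1, h2, h3, h4⟩ := hstep n (seq n).1 (seq n).2 ih.1 ih.2
        rw [hseq_succ]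
        exact ⟨h2, h3⟩
  have hK3 : ∀ n : ℕ, ∀ k : ℤ, dist (iterZ f k (seq (n+1)).1) (iterZ f k (seq n).1) ≤ 5 * eps n := by
    intro n
    obtain ⟨h1, h2, h3, h4⟩ := hstep n (seq n).1 (seq n).2 (hinv n).1 (hinv n).2
    rw [hseq_succ]
    exact h4
  -- telescoping
  have tele : ∀ (k : ℤ) (n M : ℕ),
      dist (iterZ f k (seq n).1) (iterZ f k (seq (n+M)).1) ≤ 10 * eps n := by
    intro k n M
    induction M generalizing n with
    | zero =>
        rw [Nat.add_zero, dist_self]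
        have := heps_pos n; linarith
    | succ M ih =>
        have h1 : dist (iterZ f k (seq n).1) (iterZ f k (seq (n+1)).1) ≤ 5 * eps n := by
          rw [dist_comm]; exact hK3 n k
        have h2 := ih (n+1)
        rw [show n + 1 + M = n + (M+1) by omega] at h2
        have h3 := dist_triangle (iterZ f k (seq n).1) (iterZ f k (seq (n+1)).1)
          (iterZ f k (seq (n + (M+1))).1)
        rw [heps_half n] at h2
        linarith
  -- Cauchy and limit
  have hcauchy : CauchySeq (fun n => (seq n).1) := by
    apply cauchySeq_of_le_geometric (1/2 : ℝ) (5 * ε / 2^4) (by norm_num)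
    intro n
    have := hK3 n 0
    rw [iterZ_zero, iterZ_zero, dist_comm] at this
    calc dist (seq n).1 (seq (n+1)).1 ≤ 5 * eps n := this
      _ = 5 * ε / 2^4 * (1/2)^n := by
          simp only [heps]
          rw [pow_add]
          field_simp
          ring
          rw [← mul_pow]; norm_num
  obtain ⟨z, hz⟩ := cauchySeq_tendsto_of_complete hcauchy
  -- limit bounds
  have hlim : ∀ (k : ℤ) (n : ℕ), dist (iterZ f k (seq n).1) (iterZ f k z) ≤ 10 * eps n := by
    intro k n
    have hz' : Tendsto (fun M => iterZ f k (seq (n+M)).1) atTop (nhds (iterZ f k z)) :=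
      ((continuous_iterZ f k).continuousAt.tendsto.comp (hz.comp
        (by simpa [Nat.add_comm] using tendsto_add_atTop_nat n)))
    have : Tendsto (fun M => dist (iterZ f k (seq n).1) (iterZ f k (seq (n+M)).1)) atTop
        (nhds (dist (iterZ f k (seq n).1) (iterZ f k z))) :=
      (Continuous.dist continuous_const continuous_id).continuousAt.tendsto.comp hz' |>.congr
        (fun M => rfl)
    exact le_of_tendsto this (Eventually.of_forall (fun M => tele k n M))
  refine ⟨z, ?_, ?_⟩
  · intro k
    have h1 := hlim k 0
    have h2 := hy₀ k
    have h3 : dist (iterZ f k z) (x k) ≤ dist (iterZ f k (seq 0).1) (iterZ f k z)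
        + dist (iterZ f k (seq 0).1) (x k) := by
      rw [dist_comm (iterZ f k (seq 0).1) (iterZ f k z)]
      exact dist_triangle _ _ _
    have h4 : (seq 0).1 = y₀ := rfl
    rw [h4] at h1 h3
    have h5 : eps 0 = ε / 16 := by simp [heps]; norm_num
    have h6 : (0:ℝ) < δ 0 := hδpos 0
    have h7 : δ 0 ≤ eps 0 := hδle 0
    rw [h5] at h1 h7
    linarith
  · rw [Metric.tendsto_nhds]
    intro η hη
    -- choose n with 11 * eps n < η
    have hepslim : Tendsto eps atTop (nhds 0) := by
      have htwo : Tendsto (fun n : ℕ => (2:ℝ)^(n+4)) atTop atTop :=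
        (tendsto_pow_atTop_atTop_of_one_lt (by norm_num : (1:ℝ) < 2)).comp
          (tendsto_add_atTop_nat 4)
      simpa only [heps] using tendsto_const_nhds.div_atTop htwo
    obtain ⟨n, hn⟩ := (eventually_atTop.mp (hepslim.eventually_lt_const
      (by positivity : (0:ℝ) < η/11)))
    have hbound : ∀ k : ℤ, ((seq n).2 ≤ k ∨ k ≤ -(seq n).2) →
        dist (iterZ f k z) (x k) < η := by
      intro k hk
      have h1 := hlim k n
      have h2 := (hinv n).2 k hk
      have h3 := dist_triangle (iterZ f k z) (iterZ f k (seq n).1) (x k)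
      rw [dist_comm (iterZ f k z) (iterZ f k (seq n).1)] at h3
      have h4 : δ n ≤ eps n := hδle n
      have h5 := hn n (le_refl _)
      linarith
    rw [eventually_cofinite]
    apply Set.Finite.subset (Set.finite_Ioo (-(seq n).2) ((seq n).2))
    intro k hk
    simp only [Set.mem_setOf_eq, not_lt] at hk
    simp only [Set.mem_Ioo]
    by_contra hc
    push_neg at hc
    have : dist (iterZ f k z) (x k) < η := by
      apply hbound k
      omega
    rw [Real.dist_eq, sub_zero, abs_of_nonneg dist_nonneg] at hk
    linarith

/-- characterization of L-shadowing. -/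
theorem lshadowing_iff [CompactSpace X] (f : X ≃ₜ X) :
    LShadowing f ↔ (Shadowing f ∧ ∀ ε > (0:ℝ), ∃ δ > (0:ℝ), ∀ x y : X,
      dist x y < δ → (Vs f ε x ∩ Vu f ε y).Nonempty) := by
  constructor
  · intro h
    exact ⟨lshadowing_to_shadowing f h, lshadowing_to_gluing f h⟩
  · rintro ⟨hs, hg⟩
    exact converse_lshadowing f hs hg
end

section
/- A homeomorphism f of a compact metric space X has the two-sided limit shadowing property if and only if both f and f^{-1} have the limit shadowing property and W^u(x) ∩ W^s(y) ≠ ∅ for every x,y ∈ X. -/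
open Filter Metric Set Topology

variable {X : Type*} [MetricSpace X]

section Helpers

private lemma iterZ_coe (f : X ≃ₜ X) (n : ℕ) (x : X) : iterZ f (n : ℤ) x = (⇑f)^[n] x := by
  simp [iterZ, Int.toNat_natCast]

private lemma iterZ_neg_coe (f : X ≃ₜ X) (n : ℕ) (x : X) :
    iterZ f (-(n : ℤ)) x = (⇑f.symm)^[n] x := by
  rcases Nat.eq_zero_or_pos n with h | h
  · subst h; simp [iterZ]
  · have h0 : ¬ (0 : ℤ) ≤ -(n : ℤ) := by
      have : (0 : ℤ) < (n : ℤ) := by exact_mod_cast h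
      omega
    simp [iterZ, h0, Int.toNat_natCast, h.ne']

private lemma iterZ_add_one (f : X ≃ₜ X) (k : ℤ) (x : X) :
    iterZ f (k + 1) x = f (iterZ f k x) := by
  rcases le_or_gt 0 k with hk | hk
  · have hk1 : (0 : ℤ) ≤ k + 1 := by omega
    have ht : (k + 1).toNat = k.toNat + 1 := by omega
    simp only [iterZ, if_pos hk, if_pos hk1, ht, Function.iterate_succ_apply']
  · rcases eq_or_lt_of_le (by omega : k + 1 ≤ 0) with h0 | h0
    · have hkm : k = -1 := by omega
      subst hkm
      simp [iterZ]
    · have hk1 : ¬ (0 : ℤ) ≤ k + 1 := by omega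
      have hk' : ¬ (0 : ℤ) ≤ k := by omega
      have ht : (-k).toNat = (-(k + 1)).toNat + 1 := by omega
      simp only [iterZ, if_neg hk1, if_neg hk', ht, Function.iterate_succ_apply']
      rw [Homeomorph.apply_symm_apply]

private lemma map_neg_natCast_atTop : Filter.map (fun n : ℕ => -(n : ℤ)) atTop = atBot := by
  rw [show (fun n : ℕ => -(n : ℤ)) = Neg.neg ∘ ((↑) : ℕ → ℤ) from rfl, ← Filter.map_map,
    Nat.map_cast_int_atTop, map_neg_atTop]

private lemma tendsto_cofinite_int_iff (u : ℤ → ℝ) :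
    Tendsto u cofinite (nhds 0) ↔
      Tendsto (fun n : ℕ => u n) atTop (nhds 0) ∧
        Tendsto (fun n : ℕ => u (-(n : ℤ))) atTop (nhds 0) := by
  rw [Int.cofinite_eq, tendsto_sup, ← Nat.map_cast_int_atTop, ← map_neg_natCast_atTop,
    tendsto_map'_iff, tendsto_map'_iff]
  exact and_comm

private lemma ucont_dist {α : Type*} {g : X → X} (hg : UniformContinuous g)
    {l : Filter α} {a b : α → X}
    (h : Tendsto (fun n => dist (a n) (b n)) l (nhds 0)) :
    Tendsto (fun n => dist (g (a n)) (g (b n))) l (nhds 0) := by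
  rw [Metric.tendsto_nhds] at h ⊢
  intro ε hε
  obtain ⟨δ, hδ, hgd⟩ := Metric.uniformContinuous_iff.mp hg ε hε
  filter_upwards [h δ hδ] with n hn
  rw [Real.dist_eq, sub_zero, abs_of_nonneg dist_nonneg] at hn ⊢
  exact hgd hn

private lemma dist_tendsto_trans {α : Type*} {l : Filter α} {a b c : α → X}
    (h1 : Tendsto (fun n => dist (a n) (b n)) l (nhds 0))
    (h2 : Tendsto (fun n => dist (b n) (c n)) l (nhds 0)) :
    Tendsto (fun n => dist (a n) (c n)) l (nhds 0) := by
  have h3 := h1.add h2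
  rw [add_zero] at h3
  exact squeeze_zero (fun n => dist_nonneg) (fun n => dist_triangle _ _ _) h3

private lemma dist_tendsto_symm {α : Type*} {l : Filter α} {a b : α → X}
    (h : Tendsto (fun n => dist (a n) (b n)) l (nhds 0)) :
    Tendsto (fun n => dist (b n) (a n)) l (nhds 0) :=
  h.congr fun n => dist_comm _ _

end Helpers

/-- characterization of two-sided limit shadowing. -/
theorem twoSided_limit_shadowing_iff [CompactSpace X] (f : X ≃ₜ X) :
    TwoSidedLimitShadowing f ↔
      (LimitShadowing f ∧ LimitShadowing f.symm ∧
        ∀ x y : X, (unstableSet f x ∩ stableSet f y).Nonempty) := by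
  constructor
  · intro hts
    refine ⟨?_, ?_, ?_⟩
    · -- LimitShadowing f
      intro x hx
      set xt : ℤ → X := fun k => if 0 ≤ k then x k.toNat else iterZ f k (x 0) with hxt
      have hneg : ∀ k : ℤ, k < 0 → f (xt k) = xt (k + 1) := by
        intro k hk
        have h1 : xt k = iterZ f k (x 0) := by simp [hxt, not_le.mpr hk]
        rcases le_or_gt 0 (k + 1) with h2 | h2
        · have hkm : k = -1 := by omega
          subst hkm
          simp [hxt, h1, ← iterZ_add_one, iterZ]
        · have h3 : xt (k + 1) = iterZ f (k + 1) (x 0) := by simp [hxt, not_le.mpr h2]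
          rw [h1, h3, iterZ_add_one]
      have h1 : Tendsto (fun k : ℤ => dist (f (xt k)) (xt (k + 1))) cofinite (nhds 0) := by
        rw [tendsto_cofinite_int_iff]
        constructor
        · apply hx.congr
          intro n
          have e1 : xt (n : ℤ) = x n := by simp [hxt]
          have e2 : xt ((n : ℤ) + 1) = x (n + 1) := by
            simp only [hxt, if_pos (show (0:ℤ) ≤ (n:ℤ) + 1 by positivity)]
            congr 1
          rw [e1, e2]
        · apply tendsto_const_nhds.congr' (f₁ := fun _ : ℕ => (0 : ℝ))
          filter_upwards [eventually_ge_atTop 1] with n hn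
          have : -(n : ℤ) < 0 := by
            have : (1 : ℤ) ≤ (n : ℤ) := by exact_mod_cast hn
            omega
          rw [hneg _ this, dist_self]
      obtain ⟨y, hy⟩ := hts xt h1
      rw [tendsto_cofinite_int_iff] at hy
      refine ⟨y, hy.1.congr fun n => ?_⟩
      rw [iterZ_coe]
      simp [hxt]
    · -- LimitShadowing f.symm
      intro x hx
      have hfu : UniformContinuous (⇑f) :=
        CompactSpace.uniformContinuous_of_continuous f.continuous
      have hx' : Tendsto (fun k : ℕ => dist (x k) (f (x (k + 1)))) atTop (nhds 0) := by
        have := ucont_dist hfu hx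
        apply this.congr
        intro n
        rw [Homeomorph.apply_symm_apply]
      set xt : ℤ → X := fun k => if 0 < k then iterZ f k (x 0) else x (-k).toNat with hxt
      have hposeq : ∀ k : ℤ, 0 ≤ k → f (xt k) = xt (k + 1) := by
        intro k hk
        have h2 : xt (k + 1) = iterZ f (k + 1) (x 0) := by
          simp only [hxt, if_pos (show (0:ℤ) < k + 1 by omega)]
        rcases eq_or_lt_of_le hk with h0 | h0
        · have e0 : xt k = x 0 := by
            simp only [hxt, if_neg (show ¬ (0:ℤ) < k by omega)]
            rw [show (-k).toNat = 0 by omega]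
          rw [e0, h2, iterZ_add_one]
          rw [show iterZ f k (x 0) = x 0 by rw [← h0]; simp [iterZ]]
        · have h1 : xt k = iterZ f k (x 0) := by simp only [hxt, if_pos h0]
          rw [h1, h2, iterZ_add_one]
      have hnegeq : ∀ n : ℕ, xt (-(n : ℤ)) = x n := by
        intro n
        have : ¬ (0 : ℤ) < -(n : ℤ) := by omega
        simp [hxt, this]
      have h1 : Tendsto (fun k : ℤ => dist (f (xt k)) (xt (k + 1))) cofinite (nhds 0) := by
        rw [tendsto_cofinite_int_iff]
        constructor
        · apply tendsto_const_nhds.congr' (f₁ := fun _ : ℕ => (0 : ℝ))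
          filter_upwards [] with n
          rw [hposeq (n : ℤ) (by positivity), dist_self]
        · have hg : Tendsto (fun n : ℕ => dist (x (n - 1)) (f (x (n - 1 + 1)))) atTop (nhds 0) :=
            hx'.comp (tendsto_sub_atTop_nat 1)
          apply hg.congr'
          filter_upwards [eventually_ge_atTop 1] with n hn
          have hsub : n - 1 + 1 = n := by omega
          have e1 : xt (-(n : ℤ)) = x n := hnegeq n
          have e2 : xt (-(n : ℤ) + 1) = x (n - 1) := by
            have : -(n : ℤ) + 1 = -((n - 1 : ℕ) : ℤ) := by
              push_cast [hsub]
              omega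
            rw [this, hnegeq]
          rw [hsub, e1, e2, dist_comm]
      obtain ⟨y, hy⟩ := hts xt h1
      rw [tendsto_cofinite_int_iff] at hy
      refine ⟨y, hy.2.congr fun n => ?_⟩
      rw [iterZ_neg_coe, hnegeq]
    · -- unstable/stable intersection
      intro a b
      set xt : ℤ → X := fun k => if 0 ≤ k then iterZ f k b else iterZ f k a with hxt
      have h1 : Tendsto (fun k : ℤ => dist (f (xt k)) (xt (k + 1))) cofinite (nhds 0) := by
        rw [tendsto_cofinite_int_iff]
        constructor
        · apply tendsto_const_nhds.congr' (f₁ := fun _ : ℕ => (0 : ℝ))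
          filter_upwards [] with n
          have e1 : xt (n : ℤ) = iterZ f (n : ℤ) b := by simp [hxt]
          have e2 : xt ((n : ℤ) + 1) = iterZ f ((n : ℤ) + 1) b := by
            simp [hxt, (show (0 : ℤ) ≤ (n : ℤ) + 1 by positivity)]
          rw [e1, e2, iterZ_add_one, dist_self]
        · apply tendsto_const_nhds.congr' (f₁ := fun _ : ℕ => (0 : ℝ))
          filter_upwards [eventually_ge_atTop 2] with n hn
          have hn' : (2 : ℤ) ≤ (n : ℤ) := by exact_mod_cast hn
          have e1 : xt (-(n : ℤ)) = iterZ f (-(n : ℤ)) a := by simp [hxt, (show ¬ (0:ℤ) ≤ -(n:ℤ) by omega), (show n ≠ 0 by omega)]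
          have e2 : xt (-(n : ℤ) + 1) = iterZ f (-(n : ℤ) + 1) a := by
            simp [hxt, (show ¬ (0:ℤ) ≤ -(n:ℤ) + 1 by omega)]
          rw [e1, e2, iterZ_add_one, dist_self]
      obtain ⟨z, hz⟩ := hts xt h1
      rw [tendsto_cofinite_int_iff] at hz
      refine ⟨z, ?_, ?_⟩
      · -- z ∈ unstableSet f a
        show Tendsto (fun n : ℕ => dist ((⇑f.symm)^[n] a) ((⇑f.symm)^[n] z)) atTop (nhds 0)
        apply (dist_tendsto_symm hz.2).congr'
        filter_upwards [eventually_ge_atTop 1] with n hn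
        have hn' : (1 : ℤ) ≤ (n : ℤ) := by exact_mod_cast hn
        have e1 : xt (-(n : ℤ)) = iterZ f (-(n : ℤ)) a := by
          simp [hxt, (show ¬ (0:ℤ) ≤ -(n:ℤ) by omega), (show n ≠ 0 by omega)]
        rw [e1, iterZ_neg_coe, iterZ_neg_coe]
      · -- z ∈ stableSet f b
        show Tendsto (fun n : ℕ => dist ((⇑f)^[n] b) ((⇑f)^[n] z)) atTop (nhds 0)
        apply (dist_tendsto_symm hz.1).congr
        intro n
        have e1 : xt (n : ℤ) = iterZ f (n : ℤ) b := by simp [hxt]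
        rw [e1, iterZ_coe, iterZ_coe]
  · rintro ⟨hl, hl', hws⟩ x hx
    rw [tendsto_cofinite_int_iff] at hx
    -- forward pseudo-orbit
    have hp : Tendsto (fun n : ℕ => dist (f (x (n : ℤ))) (x ((n + 1 : ℕ) : ℤ))) atTop (nhds 0) := by
      apply hx.1.congr
      intro n
      have : ((n : ℤ) + 1) = ((n + 1 : ℕ) : ℤ) := by push_cast; ring
      rw [this]
    obtain ⟨y, hy⟩ := hl (fun n : ℕ => x (n : ℤ)) hp
    -- backward pseudo-orbit
    have hfu : UniformContinuous (⇑f.symm) :=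
      CompactSpace.uniformContinuous_of_continuous f.symm.continuous
    have hsh : Tendsto (fun n : ℕ => dist (f (x (-((n + 1 : ℕ) : ℤ)))) (x (-((n + 1 : ℕ) : ℤ) + 1)))
        atTop (nhds 0) := hx.2.comp (tendsto_add_atTop_nat 1)
    have hq : Tendsto (fun n : ℕ => dist (f.symm (x (-(n : ℤ)))) (x (-((n + 1 : ℕ) : ℤ))))
        atTop (nhds 0) := by
      have h2 := ucont_dist hfu hsh
      apply (dist_tendsto_symm h2).congr
      intro n
      have e1 : -((n + 1 : ℕ) : ℤ) + 1 = -(n : ℤ) := by push_cast; ring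
      rw [Homeomorph.symm_apply_apply, e1]
    obtain ⟨w, hw⟩ := hl' (fun n : ℕ => x (-(n : ℤ))) hq
    obtain ⟨z, hzu, hzs⟩ := hws w y
    refine ⟨z, ?_⟩
    rw [tendsto_cofinite_int_iff]
    constructor
    · have hzs' : Tendsto (fun n : ℕ => dist ((⇑f)^[n] z) ((⇑f)^[n] y)) atTop (nhds 0) :=
        dist_tendsto_symm hzs
      have := dist_tendsto_trans hzs' hy
      apply this.congr
      intro n
      rw [iterZ_coe]
    · have hzu' : Tendsto (fun n : ℕ => dist ((⇑f.symm)^[n] z) ((⇑f.symm)^[n] w)) atTop (nhds 0) :=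
        dist_tendsto_symm hzu
      have := dist_tendsto_trans hzu' hw
      apply this.congr
      intro n
      rw [iterZ_neg_coe]
end
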